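/- arXiv:2008.09177 — 8 statements merged into one kernel-verified Lean document; each statement's English description precedes it below -/
import Mathlib

section
/- Let $x:[t_0,\infty)\to(0,\infty)$ be continuously differentiable, $\bar{x}>0$, and $0<\alpha\le 1$. Then for every $t\ge t_0$, ${}^{C}_{t_0}D^{\alpha}_t\left[x(t)-\bar{x}-\bar{x}\ln\frac{x(t)}{\bar{x}}\right] \le \left(1-\frac{\bar{x}}{x(t)}\right)\,{}^{C}_{t_0}D^{\alpha}_t\,x(t)$. -/
open MeasureTheory Filter Set
open scoped Topology

/-- Caputo fractional derivative of order `α ∈ (0,1]`. -/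
noncomputable def caputo (t0 α : ℝ) (u : ℝ → ℝ) (t : ℝ) : ℝ :=
  if α = 1 then deriv u t
  else (1 / Real.Gamma (1 - α)) * ∫ y in t0..t, deriv u y / (t - y) ^ α

theorem caputo_log_volterra_estimate
    (t0 α xbar : ℝ) (x : ℝ → ℝ)
    (hx : ContDiff ℝ 1 x) (hxpos : ∀ t, t0 ≤ t → 0 < x t)
    (hxbar : 0 < xbar) (hα0 : 0 < α) (hα1 : α ≤ 1)
    (t : ℝ) (ht : t0 ≤ t) :
    caputo t0 α (fun τ => x τ - xbar - xbar * Real.log (x τ / xbar)) t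
      ≤ (1 - xbar / x t) * caputo t0 α x t := by
  have hdx : ∀ y, HasDerivAt x (deriv x y) y :=
    fun y => (hx.differentiable one_ne_zero y).hasDerivAt
  set V : ℝ → ℝ := fun τ => x τ - xbar - xbar * Real.log (x τ / xbar) with hV_def
  have hV : ∀ y : ℝ, 0 < x y → HasDerivAt V (deriv x y * (1 - xbar / x y)) y := by
    intro y hy
    have h1 : HasDerivAt (fun τ => x τ / xbar) (deriv x y / xbar) y := (hdx y).div_const xbar
    have h2 : HasDerivAt (fun τ => Real.log (x τ / xbar))
        ((deriv x y / xbar) / (x y / xbar)) y :=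
      h1.log (div_ne_zero hy.ne' hxbar.ne')
    have h3 := ((hdx y).sub_const xbar).sub (h2.const_mul xbar)
    refine HasDerivAt.congr_deriv (h3 : HasDerivAt V _ y) ?_
    have hyne := hy.ne'
    have hxbne := hxbar.ne'
    field_simp
  have hxt : 0 < x t := hxpos t ht
  by_cases hα : α = 1
  · simp only [caputo, if_pos hα]
    rw [(hV t hxt).deriv, mul_comm]
  · have hα1' : α < 1 := lt_of_le_of_ne hα1 hα
    simp only [caputo, if_neg hα]
    rcases eq_or_lt_of_le ht with rfl | htt
    · simp
    -- α < 1, t0 < t : the main case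
    have hpos : ∀ y ∈ Icc t0 t, 0 < x y := fun y hy => hxpos y hy.1
    set k : ℝ := 1 - xbar / x t with hk_def
    set W : ℝ → ℝ := fun y => (t - y) ^ (-α) with hW_def
    have hdiv : ∀ (a z : ℝ), 0 ≤ z → a / z ^ α = a * z ^ (-α) := by
      intro a z hz
      rw [Real.rpow_neg hz, div_eq_mul_inv]
    have huIcc : uIcc t0 t = Icc t0 t := uIcc_of_le ht
    -- integrability of the weight
    have hW : IntervalIntegrable W volume t0 t := by
      have h := (intervalIntegral.intervalIntegrable_rpow'
        (a := 0) (b := t - t0) (r := -α) (by linarith)).comp_sub_left t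
      simpa [sub_sub_cancel] using h.symm
    have hcx' : Continuous (deriv x) := hx.continuous_deriv le_rfl
    have hcont1 : ContinuousOn (fun y => deriv x y * (1 - xbar / x y)) (Icc t0 t) := by
      refine hcx'.continuousOn.mul (continuousOn_const.sub ?_)
      exact continuousOn_const.div hx.continuous.continuousOn
        (fun y hy => (hpos y hy).ne')
    set G' : ℝ → ℝ := fun y => deriv x y * (1 - xbar / x y) - k * deriv x y with hG'_def
    have hG'cont : ContinuousOn G' (Icc t0 t) :=
      hcont1.sub (continuousOn_const.mul hcx'.continuousOn)
    have hInt1 : IntervalIntegrable (fun y => deriv x y * (1 - xbar / x y) * W y)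
        volume t0 t := hW.continuousOn_mul (huIcc ▸ hcont1)
    have hInt2 : IntervalIntegrable (fun y => deriv x y * W y) volume t0 t :=
      hW.continuousOn_mul hcx'.continuousOn
    have hInt3 : IntervalIntegrable (fun y => G' y * W y) volume t0 t :=
      hW.continuousOn_mul (huIcc ▸ hG'cont)
    -- the convexity remainder
    set g : ℝ → ℝ := fun y => V y - V t - k * (x y - x t) with hg_def
    have hg_deriv : ∀ y ∈ Icc t0 t, HasDerivAt g (G' y) y := by
      intro y hy
      exact ((hV y (hpos y hy)).sub_const (V t)).sub
        (((hdx y).sub_const (x t)).const_mul k)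
    have hg_nonneg : ∀ y ∈ Icc t0 t, 0 ≤ g y := by
      intro y hy
      have hxy := hpos y hy
      have hratio : 0 < x y / x t := div_pos hxy hxt
      have hlog : Real.log (x y / x t) ≤ x y / x t - 1 :=
        Real.log_le_sub_one_of_pos hratio
      have hlogs : Real.log (x y / xbar) - Real.log (x t / xbar)
          = Real.log (x y / x t) := by
        rw [Real.log_div hxy.ne' hxbar.ne', Real.log_div hxt.ne' hxbar.ne',
          Real.log_div hxy.ne' hxt.ne']
        ring
      have hgy : g y = xbar * ((x y / x t - 1) - Real.log (x y / x t)) := by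
        simp only [hg_def, hV_def, hk_def, ← hlogs]
        field_simp
        ring
      rw [hgy]
      have : 0 ≤ (x y / x t - 1) - Real.log (x y / x t) := by linarith
      exact mul_nonneg hxbar.le this
    have hgt : g t = 0 := by simp only [hg_def]; ring
    have hG't : G' t = 0 := by simp only [hG'_def, hk_def]; ring
    -- main estimate : S ≤ 0
    have hS : (∫ y in t0..t, G' y * W y) ≤ 0 := by
      set F : ℝ → ℝ := fun s => ∫ y in t0..s, G' y * W y with hF_def
      have hFcont : ContinuousOn F (Icc t0 t) := by
        have := intervalIntegral.continuousOn_primitive_interval' hInt3 left_mem_uIcc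
        rwa [huIcc] at this
      have hneBot : (𝓝[Ico t0 t] t).NeBot := by
        apply mem_closure_iff_nhdsWithin_neBot.1
        rw [closure_Ico htt.ne]
        exact right_mem_Icc.2 ht
      have hFt : Tendsto F (𝓝[Ico t0 t] t) (𝓝 (F t)) :=
        (hFcont t (right_mem_Icc.2 ht)).mono Ico_subset_Icc_self
      -- the bound via integration by parts on [t0, s]
      have hbound : ∀ s ∈ Ico t0 t, F s ≤ g s * W s := by
        rintro s ⟨hs1, hs2⟩
        have hsub : uIcc t0 s ⊆ Icc t0 t := by
          rw [uIcc_of_le hs1]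
          exact Icc_subset_Icc le_rfl hs2.le
        set W' : ℝ → ℝ := fun y => α * (t - y) ^ (-α - 1) with hW'_def
        have hW'deriv : ∀ y ∈ uIcc t0 s, HasDerivAt W (W' y) y := by
          intro y hy
          have hy' : y ≤ s := (uIcc_of_le hs1 ▸ hy).2
          have hty : t - y ≠ 0 := by
            have : y < t := lt_of_le_of_lt hy' hs2
            exact (sub_pos.2 this).ne'
          have h1 : HasDerivAt (fun y : ℝ => t - y) (-1) y :=
            (hasDerivAt_id y).const_sub t
          have h2 := h1.rpow_const (p := -α) (Or.inl hty)
          convert h2 using 1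
          simp only [hW'_def]
          ring
        have htpos : ∀ y ∈ uIcc t0 s, (0:ℝ) < t - y := by
          intro y hy
          have hy' : y ≤ s := (uIcc_of_le hs1 ▸ hy).2
          linarith
        have hW'cont : ContinuousOn W' (uIcc t0 s) := by
          refine continuousOn_const.mul ?_
          exact (continuous_const.sub continuous_id).continuousOn.rpow_const
            (fun y hy => Or.inl (htpos y hy).ne')
        have hW'int : IntervalIntegrable W' volume t0 s := hW'cont.intervalIntegrable
        have hG'int : IntervalIntegrable G' volume t0 s :=
          (hG'cont.mono hsub).intervalIntegrable
        have hparts := intervalIntegral.integral_mul_deriv_eq_deriv_mul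
          (u := W) (v := g) (u' := W') (v' := G')
          hW'deriv (fun y hy => hg_deriv y (hsub hy)) hW'int hG'int
        have hFs : F s = ∫ y in t0..s, W y * G' y :=
          intervalIntegral.integral_congr (fun y _ => mul_comm _ _)
        have h1 : 0 ≤ W t0 * g t0 := by
          refine mul_nonneg ?_ (hg_nonneg t0 ⟨le_rfl, ht⟩)
          exact Real.rpow_nonneg (by linarith) _
        have h2 : 0 ≤ ∫ y in t0..s, W' y * g y := by
          refine intervalIntegral.integral_nonneg hs1 ?_
          intro y hy
          have hy' : y ∈ Icc t0 t := ⟨hy.1, hy.2.trans hs2.le⟩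
          refine mul_nonneg ?_ (hg_nonneg y hy')
          exact mul_nonneg hα0.le (Real.rpow_nonneg (by linarith [hy.2]) _)
        rw [hFs, hparts]
        have := mul_comm (W s) (g s)
        linarith [this ▸ le_refl (W s * g s)]
      -- the bound tends to 0
      have hslope : Tendsto (slope g t) (𝓝[≠] t) (𝓝 0) := by
        have := hasDerivAt_iff_tendsto_slope.1 (hg_deriv t (right_mem_Icc.2 ht))
        rwa [hG't] at this
      have hls : 𝓝[Ico t0 t] t ≤ 𝓝[≠] t := by
        apply nhdsWithin_mono
        intro s hs
        exact hs.2.ne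
      have h1 : Tendsto (fun s => slope g t s) (𝓝[Ico t0 t] t) (𝓝 0) :=
        hslope.mono_left hls
      have h2 : Tendsto (fun s => (t - s) ^ ((1:ℝ) - α)) (𝓝[Ico t0 t] t) (𝓝 0) := by
        have hc : ContinuousAt (fun z : ℝ => z ^ ((1:ℝ) - α)) 0 :=
          Real.continuousAt_rpow_const 0 _ (Or.inr (by linarith))
        have hts : Tendsto (fun s : ℝ => t - s) (𝓝[Ico t0 t] t) (𝓝 0) := by
          have : Tendsto (fun s : ℝ => t - s) (𝓝 t) (𝓝 (t - t)) :=
            (continuous_const.sub continuous_id).tendsto t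
          simpa using this.mono_left nhdsWithin_le_nhds
        have := hc.tendsto.comp hts
        simpa [Function.comp_def, Real.zero_rpow (by linarith : (1:ℝ) - α ≠ 0)] using this
      have hB : Tendsto (fun s => g s * W s) (𝓝[Ico t0 t] t) (𝓝 0) := by
        have hprod : Tendsto (fun s => -slope g t s * (t - s) ^ ((1:ℝ) - α))
            (𝓝[Ico t0 t] t) (𝓝 0) := by
          have := h1.neg.mul h2
          simpa using this
        refine hprod.congr' ?_
        filter_upwards [eventually_mem_nhdsWithin] with s hs
        have hts : (0:ℝ) < t - s := by
          have := hs.2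
          linarith
        have hslope_eq : slope g t s = g s / (s - t) := by
          rw [slope_def_field, hgt]
          ring_nf
        rw [hslope_eq, show (1:ℝ) - α = 1 + -α by ring, Real.rpow_add hts,
          Real.rpow_one, show s - t = -(t - s) by ring, div_neg, neg_neg,
          ← mul_assoc, div_mul_cancel₀ _ hts.ne']
      have hle : ∀ᶠ s in 𝓝[Ico t0 t] t, F s ≤ g s * W s := by
        filter_upwards [eventually_mem_nhdsWithin] with s hs
        exact hbound s hs
      exact le_of_tendsto_of_tendsto hFt hB hle
    -- assemble
    have hI1 : (∫ y in t0..t, deriv V y / (t - y) ^ α)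
        = ∫ y in t0..t, deriv x y * (1 - xbar / x y) * W y := by
      refine intervalIntegral.integral_congr ?_
      intro y hy
      rw [huIcc] at hy
      show deriv V y / (t - y) ^ α = deriv x y * (1 - xbar / x y) * W y
      rw [(hV y (hpos y hy)).deriv, hdiv _ _ (sub_nonneg.2 hy.2)]
    have hI2 : (∫ y in t0..t, deriv x y / (t - y) ^ α)
        = ∫ y in t0..t, deriv x y * W y := by
      refine intervalIntegral.integral_congr ?_
      intro y hy
      rw [huIcc] at hy
      show deriv x y / (t - y) ^ α = deriv x y * W y
      rw [hdiv _ _ (sub_nonneg.2 hy.2)]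
    rw [hI1, hI2]
    have hΓ : 0 < Real.Gamma (1 - α) := Real.Gamma_pos_of_pos (by linarith)
    have hmain : (∫ y in t0..t, deriv x y * (1 - xbar / x y) * W y)
        ≤ k * ∫ y in t0..t, deriv x y * W y := by
      have hkint := hInt2.const_mul k
      have hsub := intervalIntegral.integral_sub hInt1 hkint
      have hGW : (∫ y in t0..t, (deriv x y * (1 - xbar / x y) * W y
          - k * (deriv x y * W y))) = ∫ y in t0..t, G' y * W y := by
        refine intervalIntegral.integral_congr ?_
        intro y _
        simp only [hG'_def]
        ring
      rw [hGW] at hsub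
      rw [intervalIntegral.integral_const_mul] at hsub
      linarith
    calc 1 / Real.Gamma (1 - α) * ∫ y in t0..t, deriv x y * (1 - xbar / x y) * W y
        ≤ 1 / Real.Gamma (1 - α) * (k * ∫ y in t0..t, deriv x y * W y) := by
          exact mul_le_mul_of_nonneg_left hmain (by positivity)
      _ = k * (1 / Real.Gamma (1 - α) * ∫ y in t0..t, deriv x y * W y) := by ring
end

section
/- Let $x:[t_0,\infty)\to(0,\infty)$ be continuously differentiable, $g:(0,\infty)\to(0,\infty)$ differentiable and strictly increasing, and $0<\alpha<1$. Then for each $t>t_0$, $\frac{1}{\Gamma(1-\alpha)}\int_{t_0}^{t}\frac{x'(y)}{(t-y)^{\alpha}}\left(1-\frac{g(x(t))}{g(x(y))}\right)dy \le 0$. -/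
open MeasureTheory Set Topology Filter

theorem key_integral_inequality
    (t0 α : ℝ) (x g : ℝ → ℝ)
    (hx : ContDiff ℝ 1 x) (hxpos : ∀ t, t0 ≤ t → 0 < x t)
    (hgdiff : DifferentiableOn ℝ g (Set.Ioi (0:ℝ)))
    (hgpos : ∀ s, 0 < s → 0 < g s)
    (hgmono : StrictMonoOn g (Set.Ioi (0:ℝ)))
    (hα0 : 0 < α) (hα1 : α < 1)
    (t : ℝ) (ht : t0 < t) :
    (1 / Real.Gamma (1 - α)) *
      ∫ y in t0..t, deriv x y / (t - y) ^ α * (1 - g (x t) / g (x y)) ≤ 0 := by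
  have hΓ : 0 < Real.Gamma (1 - α) := Real.Gamma_pos_of_pos (by linarith)
  set f : ℝ → ℝ := fun y => deriv x y / (t - y) ^ α * (1 - g (x t) / g (x y)) with hfdef
  suffices hI : (∫ y in t0..t, f y) ≤ 0 by
    exact mul_nonpos_of_nonneg_of_nonpos (by positivity) hI
  -- basic continuity facts
  have hxc : Continuous x := hx.continuous
  have hx'c : Continuous (deriv x) := hx.continuous_deriv le_rfl
  have hxd : ∀ y, HasDerivAt x (deriv x y) y :=
    fun y => (hx.differentiable one_ne_zero y).hasDerivAt
  have hgc : ContinuousOn g (Ioi (0:ℝ)) := hgdiff.continuousOn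
  set φ : ℝ → ℝ := fun s => 1 - g (x t) / g s with hφdef
  have hφc : ContinuousOn φ (Ioi (0:ℝ)) :=
    continuousOn_const.sub (continuousOn_const.div hgc fun s hs => (hgpos s hs).ne')
  have hsub : ∀ a b : ℝ, t0 ≤ a → t0 ≤ b → uIcc (x a) (x b) ⊆ Ioi (0:ℝ) := by
    intro a b ha hb s hs
    exact lt_of_lt_of_le (lt_min (hxpos a ha) (hxpos b hb)) hs.1
  have hφint : ∀ y, t0 ≤ y → IntervalIntegrable φ volume (x t) (x y) := by
    intro y hy
    exact (hφc.mono (hsub t y ht.le hy)).intervalIntegrable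
  set G : ℝ → ℝ := fun u => ∫ s in x t..u, φ s with hGdef
  set F : ℝ → ℝ := fun y => G (x y) with hFdef
  -- F is nonnegative on [t0, ∞)
  have hFnonneg : ∀ y, t0 ≤ y → 0 ≤ F y := by
    intro y hy
    rcases le_or_gt (x t) (x y) with h | h
    · refine intervalIntegral.integral_nonneg h ?_
      intro u hu
      have hu0 : 0 < u := lt_of_lt_of_le (hxpos t ht.le) hu.1
      have : g (x t) ≤ g u :=
        hgmono.monotoneOn (hxpos t ht.le) hu0 hu.1
      have hgu : 0 < g u := hgpos u hu0
      simp only [hφdef, sub_nonneg]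
      exact (div_le_one hgu).mpr this
    · have hsymm : F y = -∫ s in x y..x t, φ s := by
        show (∫ s in x t..x y, φ s) = -∫ s in x y..x t, φ s
        rw [intervalIntegral.integral_symm (x y) (x t)]
      have hnn : 0 ≤ ∫ s in x y..x t, -φ s := by
        refine intervalIntegral.integral_nonneg h.le ?_
        intro u hu
        have hu0 : 0 < u := lt_of_lt_of_le (hxpos y hy) hu.1
        have hle : g u ≤ g (x t) :=
          hgmono.monotoneOn hu0 (hxpos t ht.le) hu.2
        have hgu : 0 < g u := hgpos u hu0
        simp only [hφdef, neg_sub]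
        rw [sub_nonneg]
        exact (one_le_div hgu).mpr hle
      rw [intervalIntegral.integral_neg] at hnn
      rw [hsymm]
      linarith
  -- derivative of F
  have hF' : ∀ y, t0 ≤ y → HasDerivAt F (deriv x y * φ (x y)) y := by
    intro y hy
    have hxy0 : 0 < x y := hxpos y hy
    have hG : HasDerivAt G (φ (x y)) (x y) := by
      refine intervalIntegral.integral_hasDerivAt_right (hφint y hy)
        (hφc.stronglyMeasurableAtFilter isOpen_Ioi _ hxy0) ?_
      exact hφc.continuousAt (Ioi_mem_nhds hxy0)
    have := hG.comp y (hxd y)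
    rw [mul_comm]; exact this
  -- continuity of F' on any set
  have hF'cont : ContinuousOn (fun y => deriv x y * φ (x y)) (Icc t0 t) := by
    refine hx'c.continuousOn.mul (hφc.comp hxc.continuousOn ?_)
    intro y hy
    exact hxpos y hy.1
  -- bound M for F'
  obtain ⟨M, hM⟩ : ∃ M, ∀ y ∈ Icc t0 t, ‖deriv x y * φ (x y)‖ ≤ M :=
    isCompact_Icc.exists_bound_of_continuousOn hF'cont
  -- interval integrability of the kernel
  have hker : IntervalIntegrable (fun y => (t - y) ^ (-α)) volume t0 t := by
    have h1 : IntervalIntegrable (fun z : ℝ => z ^ (-α)) volume 0 (t - t0) :=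
      intervalIntegral.intervalIntegrable_rpow' (by linarith)
    have h2 := h1.comp_sub_left t
    simpa using h2.symm
  -- interval integrability of f on [t0, t]
  have hfint : IntervalIntegrable f volume t0 t := by
    rw [intervalIntegrable_iff_integrableOn_Ioc_of_le ht.le,
      integrableOn_Ioc_iff_integrableOn_Ioo]
    have hmeas : AEStronglyMeasurable f (volume.restrict (Ioo t0 t)) := by
      refine ContinuousOn.aestronglyMeasurable ?_ measurableSet_Ioo
      refine ContinuousOn.mul ?_ ?_
      · refine hx'c.continuousOn.div ?_ ?_
        · exact (continuous_const.sub continuous_id).rpow_const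
            (fun y => Or.inr hα0.le) |>.continuousOn
        · intro y hy
          have : 0 < t - y := by linarith [hy.2]
          positivity
      · refine (hφc.comp hxc.continuousOn ?_)
        intro y hy
        exact hxpos y hy.1.le
    have hbound : Integrable (fun y => M * (t - y) ^ (-α)) (volume.restrict (Ioo t0 t)) := by
      have := (hker.const_mul M)
      rw [intervalIntegrable_iff_integrableOn_Ioc_of_le ht.le,
        integrableOn_Ioc_iff_integrableOn_Ioo] at this
      exact this
    refine hbound.mono' hmeas ?_
    filter_upwards [ae_restrict_mem measurableSet_Ioo] with y hy
    have hty : 0 < t - y := by linarith [hy.2]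
    have hfy : f y = (deriv x y * φ (x y)) * (t - y) ^ (-α) := by
      simp only [hfdef, hφdef]
      rw [Real.rpow_neg hty.le]
      ring
    rw [hfy, norm_mul]
    have h1 : ‖deriv x y * φ (x y)‖ ≤ M := hM y ⟨hy.1.le, hy.2.le⟩
    have h2 : ‖(t - y) ^ (-α)‖ = (t - y) ^ (-α) :=
      Real.norm_of_nonneg (Real.rpow_nonneg hty.le _)
    rw [h2]
    exact mul_le_mul_of_nonneg_right h1 (Real.rpow_nonneg hty.le _)
  -- the key estimate on [t0, c] for c < t
  have hkey : ∀ c ∈ Ioo t0 t, (∫ y in t0..c, f y) ≤ M * (t - c) ^ (1 - α) := by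
    intro c hc
    have hc0 : t0 < c := hc.1
    have hct : c < t := hc.2
    -- rewrite integral
    have hcong : (∫ y in t0..c, f y)
        = ∫ y in t0..c, (deriv x y * φ (x y)) * (t - y) ^ (-α) := by
      refine intervalIntegral.integral_congr ?_
      intro y hy
      rw [uIcc_of_le hc0.le] at hy
      have hty : 0 < t - y := by linarith [hy.2]
      simp only [hfdef, hφdef]
      rw [Real.rpow_neg hty.le]
      ring
    -- derivative of v
    have hv' : ∀ y ∈ Icc t0 c, HasDerivAt (fun y => (t - y) ^ (-α))
        (α * (t - y) ^ (-α - 1)) y := by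
      intro y hy
      have hty : t - y ≠ 0 := by
        have : 0 < t - y := by linarith [hy.2]
        exact this.ne'
      have h1 : HasDerivAt (fun y : ℝ => t - y) (-1) y := by
        simpa using (hasDerivAt_id y).const_sub t
      have h2 : HasDerivAt (fun z : ℝ => z ^ (-α)) (-α * (t - y) ^ (-α - 1)) (t - y) :=
        Real.hasDerivAt_rpow_const (Or.inl hty)
      have := h2.comp y h1
      exact this.congr_deriv (by ring)
    -- product rule function P = F * v
    have hP : ∀ y ∈ uIcc t0 c, HasDerivAt (fun y => F y * (t - y) ^ (-α))
        ((deriv x y * φ (x y)) * (t - y) ^ (-α) + F y * (α * (t - y) ^ (-α - 1))) y := by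
      intro y hy
      rw [uIcc_of_le hc0.le] at hy
      exact (hF' y hy.1).mul (hv' y hy)
    have hIccsub : Icc t0 c ⊆ Icc t0 t := Icc_subset_Icc le_rfl hct.le
    have hFcont : ContinuousOn F (Icc t0 c) :=
      fun y hy => ((hF' y hy.1).continuousAt).continuousWithinAt
    have hvcont : ContinuousOn (fun y => (t - y) ^ (-α)) (Icc t0 c) :=
      fun y hy => ((hv' y hy).continuousAt).continuousWithinAt
    have hv'cont : ContinuousOn (fun y => α * (t - y) ^ (-α - 1)) (Icc t0 c) := by
      refine continuousOn_const.mul ?_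
      intro y hy
      have hty : t - y ≠ 0 := by
        have : 0 < t - y := by linarith [hy.2]
        exact this.ne'
      exact (((continuous_const.sub continuous_id).continuousAt).rpow_const
        (Or.inl hty)).continuousWithinAt
    have hint1 : IntervalIntegrable (fun y => (deriv x y * φ (x y)) * (t - y) ^ (-α))
        volume t0 c := by
      refine ContinuousOn.intervalIntegrable ?_
      rw [uIcc_of_le hc0.le]
      exact ((hF'cont.mono hIccsub).mul hvcont)
    have hint2 : IntervalIntegrable (fun y => F y * (α * (t - y) ^ (-α - 1)))
        volume t0 c := by
      refine ContinuousOn.intervalIntegrable ?_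
      rw [uIcc_of_le hc0.le]
      exact hFcont.mul hv'cont
    have hparts : (∫ y in t0..c, ((deriv x y * φ (x y)) * (t - y) ^ (-α)
          + F y * (α * (t - y) ^ (-α - 1))))
        = F c * (t - c) ^ (-α) - F t0 * (t - t0) ^ (-α) :=
      intervalIntegral.integral_eq_sub_of_hasDerivAt hP (hint1.add hint2)
    rw [intervalIntegral.integral_add hint1 hint2] at hparts
    -- the second integral is nonnegative
    have hsnd : 0 ≤ ∫ y in t0..c, F y * (α * (t - y) ^ (-α - 1)) := by
      refine intervalIntegral.integral_nonneg hc0.le ?_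
      intro y hy
      have hty : (0:ℝ) ≤ t - y := by linarith [hy.2]
      exact mul_nonneg (hFnonneg y hy.1)
        (mul_nonneg hα0.le (Real.rpow_nonneg hty _))
    have hFt0v : 0 ≤ F t0 * (t - t0) ^ (-α) :=
      mul_nonneg (hFnonneg t0 le_rfl) (Real.rpow_nonneg (by linarith) _)
    -- bound on F c
    have hFc : F c ≤ M * (t - c) := by
      have hFtc : (∫ y in c..t, deriv x y * φ (x y)) = F t - F c := by
        refine intervalIntegral.integral_eq_sub_of_hasDerivAt ?_ ?_
        · intro y hy
          rw [uIcc_of_le hct.le] at hy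
          exact hF' y (le_trans hc0.le hy.1)
        · refine ContinuousOn.intervalIntegrable ?_
          rw [uIcc_of_le hct.le]
          exact hF'cont.mono (Icc_subset_Icc hc0.le le_rfl)
      have hFt : F t = 0 := by
        simp [hFdef, hGdef]
      have : F c = -∫ y in c..t, deriv x y * φ (x y) := by
        rw [hFtc, hFt]; ring
      rw [this]
      calc -∫ y in c..t, deriv x y * φ (x y)
          ≤ |∫ y in c..t, deriv x y * φ (x y)| := neg_le_abs _
        _ = ‖∫ y in c..t, deriv x y * φ (x y)‖ := (Real.norm_eq_abs _).symm
        _ ≤ M * |t - c| := by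
            refine intervalIntegral.norm_integral_le_of_norm_le_const ?_
            intro y hy
            rw [uIoc_of_le hct.le] at hy
            exact hM y ⟨le_trans hc0.le hy.1.le, hy.2⟩
        _ = M * (t - c) := by rw [abs_of_pos (by linarith)]
    have hvc : (0:ℝ) ≤ (t - c) ^ (-α) := Real.rpow_nonneg (by linarith) _
    have hbound : F c * (t - c) ^ (-α) ≤ M * (t - c) ^ (1 - α) := by
      have h1 : F c * (t - c) ^ (-α) ≤ (M * (t - c)) * (t - c) ^ (-α) :=
        mul_le_mul_of_nonneg_right hFc hvc
      have h2 : (M * (t - c)) * (t - c) ^ (-α) = M * (t - c) ^ (1 - α) := by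
        have htc : (0:ℝ) < t - c := by linarith
        rw [mul_assoc, Real.rpow_sub htc, Real.rpow_one, Real.rpow_neg htc.le]
        ring
      linarith
    calc (∫ y in t0..c, f y)
        = ∫ y in t0..c, (deriv x y * φ (x y)) * (t - y) ^ (-α) := hcong
      _ = F c * (t - c) ^ (-α) - F t0 * (t - t0) ^ (-α)
          - ∫ y in t0..c, F y * (α * (t - y) ^ (-α - 1)) := by linarith [hparts]
      _ ≤ F c * (t - c) ^ (-α) := by linarith
      _ ≤ M * (t - c) ^ (1 - α) := hbound
  -- now take the limit c → t⁻ along 𝓝[Ioo t0 t] t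
  have hclos : t ∈ closure (Ioo t0 t) := by
    rw [closure_Ioo ht.ne]
    exact ⟨ht.le, le_rfl⟩
  have hNeBot : (𝓝[Ioo t0 t] t).NeBot := mem_closure_iff_nhdsWithin_neBot.mp hclos
  have hA : Filter.Tendsto (fun c => ∫ y in t0..c, f y) (𝓝[Ioo t0 t] t)
      (𝓝 (∫ y in t0..t, f y)) := by
    have hcont : ContinuousOn (fun c => ∫ y in t0..c, f y) (uIcc t0 t) :=
      intervalIntegral.continuousOn_primitive_interval' hfint left_mem_uIcc
    have := (hcont t (by rw [uIcc_of_le ht.le]; exact ⟨ht.le, le_rfl⟩)).tendsto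
    refine this.mono_left (nhdsWithin_mono t ?_)
    rw [uIcc_of_le ht.le]
    exact Ioo_subset_Icc_self
  have hB : Filter.Tendsto (fun c => M * (t - c) ^ (1 - α)) (𝓝[Ioo t0 t] t) (𝓝 0) := by
    have h1 : Filter.Tendsto (fun c : ℝ => t - c) (𝓝 t) (𝓝 0) := by
      have h0 : Filter.Tendsto (fun c : ℝ => t - c) (𝓝 t) (𝓝 (t - t)) :=
        tendsto_const_nhds.sub tendsto_id
      simpa using h0
    have h2 : Filter.Tendsto (fun z : ℝ => z ^ (1 - α)) (𝓝 0) (𝓝 0) := by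
      have hc : ContinuousAt (fun z : ℝ => z ^ (1 - α)) 0 :=
        Real.continuousAt_rpow_const 0 _ (Or.inr (by linarith))
      have h0 : (0:ℝ) ^ (1 - α) = 0 := Real.zero_rpow (by linarith)
      simpa [h0] using hc.tendsto
    have h3 := (h2.comp h1).const_mul M
    simp only [mul_zero] at h3
    exact h3.mono_left nhdsWithin_le_nhds
  have hle : (∫ y in t0..t, f y) ≤ 0 := by
    refine le_of_tendsto_of_tendsto hA hB ?_
    filter_upwards [self_mem_nhdsWithin] with c hc
    exact hkey c hc
  exact hle
end

section
/- Let $x:[t_0,\infty)\to(0,\infty)$ be continuously differentiable, $g:(0,\infty)\to(0,\infty)$ differentiable and strictly increasing, and fix $t>t_0$. Define $w(y)=x(y)-x(t)-\int_{x(t)}^{x(y)}\frac{g(x(t))}{g(s)}\,ds$. Then $\lim_{y\to t^-}\frac{(t-y)^{-\alpha}}{\Gamma(1-\alpha)}\,w(y)=0$ for every $\alpha\in(0,1)$. -/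
open MeasureTheory Set Filter

theorem boundary_limit_zero
    (t0 : ℝ) (x g : ℝ → ℝ)
    (hx : ContDiff ℝ 1 x) (hxpos : ∀ t, t0 ≤ t → 0 < x t)
    (hgdiff : DifferentiableOn ℝ g (Set.Ioi (0:ℝ)))
    (hgpos : ∀ s, 0 < s → 0 < g s)
    (hgmono : StrictMonoOn g (Set.Ioi (0:ℝ)))
    (t : ℝ) (ht : t0 < t)
    (w : ℝ → ℝ)
    (hw : ∀ y, w y = x y - x t - ∫ s in (x t)..(x y), g (x t) / g s)
    (α : ℝ) (hα0 : 0 < α) (hα1 : α < 1) :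
    Tendsto (fun y => (t - y) ^ (-α) / Real.Gamma (1 - α) * w y)
      (nhdsWithin t (Set.Iio t)) (nhds 0) := by
  have hc : 0 < x t := hxpos t ht.le
  set c := x t with hcdef
  set f : ℝ → ℝ := fun s => g c / g s with hfdef
  have hgc : ContinuousOn g (Set.Ioi 0) := hgdiff.continuousOn
  have hfc : ContinuousOn f (Set.Ioi 0) :=
    continuousOn_const.div hgc (fun s hs => (hgpos s hs).ne')
  have hfca : ContinuousAt f c := hfc.continuousAt (Ioi_mem_nhds hc)
  have hmeas : StronglyMeasurableAtFilter f (nhds c) := by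
    refine ⟨Set.Ioi 0, Ioi_mem_nhds hc, ?_⟩
    exact (hfc.aestronglyMeasurable measurableSet_Ioi)
  have hFder : HasDerivAt (fun u => ∫ s in c..u, f s) (f c) c := by
    exact intervalIntegral.integral_hasDerivAt_right
      (IntervalIntegrable.refl) hmeas hfca
  have hxd : HasDerivAt x (deriv x t) t := (hx.differentiable one_ne_zero t).hasDerivAt
  have h1 : HasDerivAt (fun y => ∫ s in c..(x y), f s) (f c * deriv x t) t :=
    hFder.comp t hxd
  have h2 : HasDerivAt (fun y => x y - c - ∫ s in c..(x y), f s)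
      (deriv x t - f c * deriv x t) t := (hxd.sub_const c).sub h1
  have hfc1 : f c = 1 := div_self (hgpos c hc).ne'
  have h3 : deriv x t - f c * deriv x t = 0 := by rw [hfc1]; ring
  rw [h3] at h2
  have hwd : HasDerivAt w 0 t :=
    h2.congr_of_eventuallyEq (Filter.Eventually.of_forall fun y => hw y)
  have hwt : w t = 0 := by simp [hw, ← hcdef]
  have hslope : Tendsto (fun y => w y / (y - t)) (nhdsWithin t (Set.Iio t)) (nhds 0) := by
    have h := hasDerivAt_iff_tendsto_slope.mp hwd
    have h' := h.mono_left (nhdsWithin_mono t (fun y hy => ne_of_lt hy))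
    refine h'.congr fun y => ?_
    simp [slope_def_field, hwt, div_eq_mul_inv, mul_comm]
  have hpow : Tendsto (fun y => (t - y) ^ (1 - α)) (nhdsWithin t (Set.Iio t)) (nhds 0) := by
    have hsub : Tendsto (fun y => t - y) (nhdsWithin t (Set.Iio t)) (nhds 0) := by
      have : Tendsto (fun y => t - y) (nhds t) (nhds (t - t)) :=
        (tendsto_const_nhds.sub tendsto_id)
      simpa using this.mono_left nhdsWithin_le_nhds
    have hcont : ContinuousAt (fun u : ℝ => u ^ (1 - α)) 0 :=
      Real.continuousAt_rpow_const 0 (1 - α) (Or.inr (by linarith))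
    have := hcont.tendsto.comp hsub
    simpa [Function.comp_def, Real.zero_rpow (by linarith : (1:ℝ) - α ≠ 0)] using this
  have hΓ : 0 < Real.Gamma (1 - α) := Real.Gamma_pos_of_pos (by linarith)
  have h4 := (hpow.mul hslope).mul_const (-(Real.Gamma (1 - α))⁻¹)
  rw [show (0:ℝ) * 0 * (-(Real.Gamma (1 - α))⁻¹) = 0 by ring] at h4
  refine h4.congr' ?_
  filter_upwards [self_mem_nhdsWithin] with y hy
  have hty : 0 < t - y := sub_pos.mpr hy
  have : (t - y) ^ (1 - α) = (t - y) * (t - y) ^ (-α) := by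
    rw [show (1:ℝ) - α = 1 + (-α) by ring, Real.rpow_add hty, Real.rpow_one]
  rw [this]
  have hyt : y - t ≠ 0 := sub_ne_zero.mpr (ne_of_lt hy)
  field_simp
  ring
end

section
/- For the SICA vector field $f(S,I,C,A)=(\Lambda-\mu S-\beta SI,\ \beta SI-(\rho+\phi+\mu)I+\alpha A+\omega C,\ \phi I-\xi_2 C,\ \rho I-\xi_1 A)$ with positive parameters, $\xi_1=\alpha+\mu+d$, $\xi_2=\omega+\mu$, suppose $(S^*,I^*,C^*,A^*)$ is an equilibrium with all coordinates positive. Define $V_1=\sum$ of Volterra terms: $V_1(S,I,C,A)=S-S^*-S^*\ln\frac{S}{S^*}+I-I^*-I^*\ln\frac{I}{I^*}+\frac{\omega}{\xi_2}\left(C-C^*-C^*\ln\frac{C}{C^*}\right)+\frac{\alpha}{\xi_1}\left(A-A^*-A^*\ln\frac{A}{A^*}\right)$. Then $\nabla V_1\cdot f=(\beta I^*S^*+\mu S^*)\left(2-\frac{S}{S^*}-\frac{S^*}{S}\right)+\alpha A^*\left(2-\frac{AI^*}{A^*I}-\frac{A^*I}{AI^*}\right)+\omega C^*\left(2-\frac{CI^*}{C^*I}-\frac{C^*I}{CI^*}\right)\le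 0$ at every point with positive coordinates. -/
open Set

lemma amgm_aux (x y : ℝ) (hx : 0 < x) (hy : 0 < y) : 2 - x / y - y / x ≤ 0 := by
  have h : 2 - x / y - y / x = -((x - y)^2 / (x * y)) := by field_simp; ring
  rw [h]
  have : 0 ≤ (x - y)^2 / (x * y) := by positivity
  linarith

theorem sica_endemic_lyapunov
    (Λ μ β ρ φ α ω d : ℝ)
    (hΛ : 0 < Λ) (hμ : 0 < μ) (hβ : 0 < β) (hρ : 0 < ρ)
    (hφ : 0 < φ) (hα : 0 < α) (hω : 0 < ω) (hd : 0 < d)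
    (ξ1 ξ2 : ℝ) (hξ1 : ξ1 = α + μ + d) (hξ2 : ξ2 = ω + μ)
    (Sstar Istar Cstar Astar : ℝ)
    (hSstar : 0 < Sstar) (hIstar : 0 < Istar) (hCstar : 0 < Cstar) (hAstar : 0 < Astar)
    -- equilibrium conditions
    (heq1 : Λ - μ * Sstar - β * Sstar * Istar = 0)
    (heq2 : β * Sstar * Istar - (ρ + φ + μ) * Istar + α * Astar + ω * Cstar = 0)
    (heq3 : φ * Istar - ξ2 * Cstar = 0)
    (heq4 : ρ * Istar - ξ1 * Astar = 0)
    (S I C A : ℝ) (hS : 0 < S) (hI : 0 < I) (hC : 0 < C) (hA : 0 < A) :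
    (1 - Sstar / S) * (Λ - μ * S - β * S * I)
      + (1 - Istar / I) * (β * S * I - (ρ + φ + μ) * I + α * A + ω * C)
      + (ω / ξ2) * (1 - Cstar / C) * (φ * I - ξ2 * C)
      + (α / ξ1) * (1 - Astar / A) * (ρ * I - ξ1 * A)
      = (β * Istar * Sstar + μ * Sstar) * (2 - S / Sstar - Sstar / S)
        + α * Astar * (2 - A * Istar / (Astar * I) - Astar * I / (A * Istar))
        + ω * Cstar * (2 - C * Istar / (Cstar * I) - Cstar * I / (C * Istar)) ∧
    (1 - Sstar / S) * (Λ - μ * S - β * S * I)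
      + (1 - Istar / I) * (β * S * I - (ρ + φ + μ) * I + α * A + ω * C)
      + (ω / ξ2) * (1 - Cstar / C) * (φ * I - ξ2 * C)
      + (α / ξ1) * (1 - Astar / A) * (ρ * I - ξ1 * A) ≤ 0 := by
  have hξ1' : (0:ℝ) < ξ1 := by rw [hξ1]; linarith
  have hξ2' : (0:ℝ) < ξ2 := by rw [hξ2]; linarith
  have key : (1 - Sstar / S) * (Λ - μ * S - β * S * I)
      + (1 - Istar / I) * (β * S * I - (ρ + φ + μ) * I + α * A + ω * C)
      + (ω / ξ2) * (1 - Cstar / C) * (φ * I - ξ2 * C)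
      + (α / ξ1) * (1 - Astar / A) * (ρ * I - ξ1 * A)
      = (β * Istar * Sstar + μ * Sstar) * (2 - S / Sstar - Sstar / S)
        + α * Astar * (2 - A * Istar / (Astar * I) - Astar * I / (A * Istar))
        + ω * Cstar * (2 - C * Istar / (Cstar * I) - Cstar * I / (C * Istar)) := by
    have hS0 := hS.ne'; have hI0 := hI.ne'; have hC0 := hC.ne'; have hA0 := hA.ne'
    have hSs0 := hSstar.ne'; have hIs0 := hIstar.ne'; have hCs0 := hCstar.ne'
    have hAs0 := hAstar.ne'; have hx10 := hξ1'.ne'; have hx20 := hξ2'.ne'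
    have hρ' : ρ = ξ1 * Astar / Istar := by field_simp; linarith
    have hφ' : φ = ξ2 * Cstar / Istar := by field_simp; linarith
    have hβ' : β = (ξ1 * Astar + ξ2 * Cstar + μ * Istar - α * Astar - ω * Cstar) / (Sstar * Istar) := by
      field_simp; rw [hρ', hφ'] at heq2; field_simp at heq2; linarith
    have hΛ' : Λ = μ * Sstar + β * Sstar * Istar := by linarith
    subst hΛ'
    subst hρ'
    subst hφ'
    subst hβ'
    field_simp
    ring
  refine ⟨key, ?_⟩
  rw [key]
  have t1 := amgm_aux S Sstar hS hSstar
  have t2 := amgm_aux (A * Istar) (Astar * I) (by positivity) (by positivity)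
  have t3 := amgm_aux (C * Istar) (Cstar * I) (by positivity) (by positivity)
  have p1 : (0:ℝ) < β * Istar * Sstar + μ * Sstar := by positivity
  have m1 := mul_nonpos_of_nonneg_of_nonpos p1.le t1
  have m2 := mul_nonpos_of_nonneg_of_nonpos (by positivity : (0:ℝ) ≤ α * Astar) t2
  have m3 := mul_nonpos_of_nonneg_of_nonpos (by positivity : (0:ℝ) ≤ ω * Cstar) t3
  linarith
end

section
/- Let $x:[t_0,\infty)\to\mathbb{R}$ be continuously differentiable, $x^*\in\mathbb{R}$, and $0<\alpha\le 1$. Then for all $t\ge t_0$, $\frac{1}{2}\,{}^{C}_{t_0}D^{\alpha}_t\left[(x(t)-x^*)^2\right]\le (x(t)-x^*)\,{}^{C}_{t_0}D^{\alpha}_t\,x(t)$. -/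
open MeasureTheory Filter Set Topology

/-- The function `y ↦ (t - y) ^ (-α)` is interval integrable on `[t0, t]`. -/
lemma aux_rpow_intble (t0 t α : ℝ) (hα1 : α < 1) :
    IntervalIntegrable (fun y => (t - y) ^ (-α)) volume t0 t := by
  have h := intervalIntegral.intervalIntegrable_rpow' (a := t - t0) (b := 0)
    (r := -α) (by linarith)
  have h2 := h.comp_sub_left t
  simpa using h2

lemma aux_intble (t0 t α : ℝ) (hα1 : α < 1) (ht : t0 ≤ t) (g : ℝ → ℝ)
    (hg : Continuous g) :
    IntervalIntegrable (fun y => g y / (t - y) ^ α) volume t0 t := by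
  have h1 : IntervalIntegrable (fun y => (t - y) ^ (-α) * g y) volume t0 t :=
    (aux_rpow_intble t0 t α hα1).mul_continuousOn hg.continuousOn
  rw [intervalIntegrable_iff] at h1 ⊢
  refine h1.congr_fun (fun y hy => ?_) measurableSet_uIoc
  rw [uIoc_of_le ht] at hy
  have hty : (0:ℝ) ≤ t - y := by linarith [hy.2]
  beta_reduce
  rw [Real.rpow_neg hty, div_eq_mul_inv, mul_comm]

/-- Key estimate: if `f ≥ 0`, `f` is `C¹` and dominated by `L (t-y)²` near `t`, then
the singular integral of its derivative is nonpositive. -/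
lemma aux_nonpos (t0 t α : ℝ) (hα0 : 0 < α) (hα1 : α < 1) (ht : t0 < t)
    (f : ℝ → ℝ) (hf : ContDiff ℝ 1 f) (hfpos : ∀ y, 0 ≤ f y) (L : ℝ)
    (hquad : ∀ y ∈ Icc t0 t, f y ≤ L * (t - y) ^ 2) :
    (∫ y in t0..t, deriv f y / (t - y) ^ α) ≤ 0 := by
  have hderiv : Continuous (deriv f) := hf.continuous_deriv le_rfl
  have hdf : ∀ y : ℝ, HasDerivAt f (deriv f y) y :=
    fun y => (hf.differentiable one_ne_zero y).hasDerivAt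
  set G : ℝ → ℝ := fun b => ∫ y in t0..b, deriv f y / (t - y) ^ α with hG
  -- integrability on the whole interval
  have hint : IntervalIntegrable (fun y => deriv f y / (t - y) ^ α) volume t0 t :=
    aux_intble t0 t α hα1 ht.le (deriv f) hderiv
  -- continuity of the primitive
  have hcont : ContinuousOn G (uIcc t0 t) := by
    apply intervalIntegral.continuousOn_primitive_interval
    rw [uIcc_of_le ht.le, integrableOn_Icc_iff_integrableOn_Ioc]
    rw [intervalIntegrable_iff, uIoc_of_le ht.le] at hint
    exact hint
  -- pointwise bound for b < t via integration by parts
  have hbound : ∀ b ∈ Ico t0 t, G b ≤ L * (t - b) ^ (2 - α) := by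
    intro b hb
    have htb : (0:ℝ) < t - b := by linarith [hb.2]
    have hicc : ∀ y ∈ uIcc t0 b, (0:ℝ) < t - y := by
      intro y hy
      rw [uIcc_of_le hb.1] at hy
      have := hy.2
      linarith
    -- rewrite the integrand on [t0, b]
    have heq : G b = ∫ y in t0..b, (t - y) ^ (-α) * deriv f y := by
      apply intervalIntegral.integral_congr
      intro y hy
      have h := hicc y hy
      simp only [Real.rpow_neg h.le, div_eq_mul_inv, mul_comm]
    -- integration by parts
    have hu : ∀ y ∈ uIcc t0 b,
        HasDerivAt (fun y => (t - y) ^ (-α)) (α * (t - y) ^ (-α - 1)) y := by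
      intro y hy
      have h1 : HasDerivAt (fun y : ℝ => t - y) (-1) y := (hasDerivAt_id y).const_sub t
      have h2 := (Real.hasDerivAt_rpow_const (x := t - y) (p := -α)
        (Or.inl (hicc y hy).ne')).comp y h1
      refine h2.congr_deriv ?_
      ring
    have hibp := intervalIntegral.integral_mul_deriv_eq_deriv_mul
      (a := t0) (b := b)
      (u := fun y => (t - y) ^ (-α)) (u' := fun y => α * (t - y) ^ (-α - 1))
      (v := f) (v' := deriv f)
      hu (fun y _ => hdf y)
      (by
        apply ContinuousOn.intervalIntegrable
        apply ContinuousOn.mul continuousOn_const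
        apply ContinuousOn.rpow_const
        · exact (continuous_const.sub continuous_id).continuousOn
        · intro y hy
          exact Or.inl (hicc y hy).ne')
      (hderiv.intervalIntegrable t0 b)
    rw [heq, hibp]
    have h1 : 0 ≤ (t - t0) ^ (-α) * f t0 := by
      apply mul_nonneg (Real.rpow_nonneg (by linarith) _) (hfpos t0)
    have h2 : 0 ≤ ∫ y in t0..b, α * (t - y) ^ (-α - 1) * f y := by
      apply intervalIntegral.integral_nonneg hb.1
      intro y hy
      apply mul_nonneg (mul_nonneg hα0.le (Real.rpow_nonneg ?_ _)) (hfpos y)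
      have := hy.2
      linarith [hb.2]
    have h3 : (t - b) ^ (-α) * f b ≤ L * (t - b) ^ (2 - α) := by
      have hfb := hquad b ⟨hb.1, hb.2.le⟩
      calc (t - b) ^ (-α) * f b ≤ (t - b) ^ (-α) * (L * (t - b) ^ 2) :=
            mul_le_mul_of_nonneg_left hfb (Real.rpow_nonneg htb.le _)
        _ = L * ((t - b) ^ (-α) * (t - b) ^ (2:ℝ)) := by
            rw [← Real.rpow_natCast (t - b) 2]; push_cast; ring
        _ = L * (t - b) ^ (2 - α) := by
            rw [← Real.rpow_add htb]; ring_nf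
    linarith
  -- take the limit b → t⁻
  have hne : (𝓝[Ico t0 t] t).NeBot := by
    rw [← mem_closure_iff_nhdsWithin_neBot, closure_Ico ht.ne]
    exact ⟨ht.le, le_rfl⟩
  have hGt : Tendsto G (𝓝[Ico t0 t] t) (𝓝 (G t)) := by
    have := (hcont t (by rw [uIcc_of_le ht.le]; exact ⟨ht.le, le_rfl⟩))
    refine this.tendsto.mono_left (nhdsWithin_mono t ?_)
    rw [uIcc_of_le ht.le]
    exact Ico_subset_Icc_self
  have hBt : Tendsto (fun b => L * (t - b) ^ (2 - α)) (𝓝[Ico t0 t] t) (𝓝 0) := by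
    have h1 : Tendsto (fun b : ℝ => t - b) (𝓝[Ico t0 t] t) (𝓝 0) := by
      have : Tendsto (fun b : ℝ => t - b) (𝓝 t) (𝓝 (t - t)) :=
        (continuous_const.sub continuous_id).tendsto t
      simpa using this.mono_left nhdsWithin_le_nhds
    have h2 : ContinuousAt (fun s : ℝ => s ^ (2 - α)) 0 :=
      Real.continuousAt_rpow_const 0 (2 - α) (Or.inr (by linarith))
    have h3 := (h2.tendsto.comp h1)
    rw [Real.zero_rpow (ne_of_gt (by linarith))] at h3
    have h4 := h3.const_mul L
    simpa using h4
  have : G t ≤ 0 :=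
    le_of_tendsto_of_tendsto hGt hBt
      (eventually_nhdsWithin_of_forall (fun b hb => hbound b hb))
  exact this

theorem caputo_quadratic_estimate
    (t0 α xstar : ℝ) (x : ℝ → ℝ)
    (hx : ContDiff ℝ 1 x)
    (hα0 : 0 < α) (hα1 : α ≤ 1)
    (t : ℝ) (ht : t0 ≤ t) :
    (1 / 2) * caputo t0 α (fun τ => (x τ - xstar) ^ 2) t
      ≤ (x t - xstar) * caputo t0 α x t := by
  have hxd : ∀ y : ℝ, HasDerivAt x (deriv x y) y :=
    fun y => (hx.differentiable one_ne_zero y).hasDerivAt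
  have hsq : ∀ y : ℝ, HasDerivAt (fun τ => (x τ - xstar) ^ 2)
      (2 * (x y - xstar) * deriv x y) y := by
    intro y
    have h := ((hxd y).sub_const xstar).pow 2
    refine h.congr_deriv ?_
    ring
  rcases eq_or_lt_of_le hα1 with hα | hα
  · -- α = 1
    rw [caputo, caputo, if_pos hα, if_pos hα, (hsq t).deriv]
    apply le_of_eq
    ring
  · -- α < 1
    rw [caputo, caputo, if_neg (ne_of_lt hα), if_neg (ne_of_lt hα)]
    rcases eq_or_lt_of_le ht with hteq | htlt
    · subst hteq
      simp
    have hΓ : 0 < Real.Gamma (1 - α) := Real.Gamma_pos_of_pos (by linarith)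
    have hC : (0:ℝ) < 1 / Real.Gamma (1 - α) := by positivity
    -- reduce to integral inequality
    set I₁ : ℝ := ∫ y in t0..t, deriv (fun τ => (x τ - xstar) ^ 2) y / (t - y) ^ α
    set I₂ : ℝ := ∫ y in t0..t, deriv x y / (t - y) ^ α
    suffices h : (1/2) * I₁ ≤ (x t - xstar) * I₂ by nlinarith
    -- recognize derivatives
    have hI₁ : (1/2) * I₁ = ∫ y in t0..t, (x y - xstar) * deriv x y / (t - y) ^ α := by
      rw [← intervalIntegral.integral_const_mul]
      apply intervalIntegral.integral_congr
      intro y _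
      beta_reduce
      rw [(hsq y).deriv]
      ring
    have hI₂ : (x t - xstar) * I₂
        = ∫ y in t0..t, (x t - xstar) * deriv x y / (t - y) ^ α := by
      rw [← intervalIntegral.integral_const_mul]
      apply intervalIntegral.integral_congr
      intro y _
      ring
    rw [hI₁, hI₂, ← sub_nonneg]
    have hcderiv : Continuous (deriv x) := hx.continuous_deriv le_rfl
    have hcx : Continuous x := hx.continuous
    have hint1 : IntervalIntegrable
        (fun y => (x y - xstar) * deriv x y / (t - y) ^ α) volume t0 t :=
      aux_intble t0 t α hα ht _ (((hcx.sub continuous_const).mul hcderiv))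
    have hint2 : IntervalIntegrable
        (fun y => (x t - xstar) * deriv x y / (t - y) ^ α) volume t0 t :=
      aux_intble t0 t α hα ht _ (continuous_const.mul hcderiv)
    rw [← intervalIntegral.integral_sub hint2 hint1]
    -- the difference integrand equals -(deriv f)/(t-y)^α for f y = (x t - x y)²/2
    set f : ℝ → ℝ := fun y => (x t - x y) ^ 2 / 2 with hf
    have hfC : ContDiff ℝ 1 f := ((contDiff_const.sub hx).pow 2).div_const 2
    have hfd : ∀ y : ℝ, HasDerivAt f (-((x t - x y) * deriv x y)) y := by
      intro y
      have h := (((hxd y).const_sub (x t)).pow 2).div_const 2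
      refine h.congr_deriv ?_
      ring
    -- quadratic bound near t
    obtain ⟨M, hM⟩ := (isCompact_Icc (a := t0) (b := t)).exists_bound_of_continuousOn
      hcderiv.continuousOn
    have hM0 : 0 ≤ M := le_trans (norm_nonneg _) (hM t ⟨ht, le_rfl⟩)
    have hlip : ∀ y ∈ Icc t0 t, |x t - x y| ≤ M * (t - y) := by
      intro y hy
      have := norm_image_sub_le_of_norm_deriv_le_segment'
        (a := y) (b := t) (f := x) (f' := deriv x)
        (fun z hz => (hxd z).hasDerivWithinAt)
        (fun z hz => hM z ⟨le_trans hy.1 hz.1, hz.2.le⟩) t ⟨hy.2, le_rfl⟩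
      rw [Real.norm_eq_abs] at this
      exact this
    have hquad : ∀ y ∈ Icc t0 t, f y ≤ (M ^ 2 / 2) * (t - y) ^ 2 := by
      intro y hy
      have h1 := hlip y hy
      have h2 : (x t - x y) ^ 2 ≤ (M * (t - y)) ^ 2 := by
        rw [← sq_abs (x t - x y)]
        apply pow_le_pow_left₀ (abs_nonneg _) h1
      simp only [hf]
      nlinarith
    have hkey := aux_nonpos t0 t α hα0 hα htlt f hfC
      (fun y => by positivity) (M ^ 2 / 2) hquad
    have heq : (∫ y in t0..t, ((x t - xstar) * deriv x y / (t - y) ^ α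
        - (x y - xstar) * deriv x y / (t - y) ^ α))
        = ∫ y in t0..t, -(deriv f y / (t - y) ^ α) := by
      apply intervalIntegral.integral_congr
      intro y _
      beta_reduce
      rw [(hfd y).deriv]
      ring
    rw [heq, intervalIntegral.integral_neg]
    linarith
end

section
/- Let $u=(u_1,\dots,u_n):[t_0,\infty)\to(0,\infty)^n$ be continuously differentiable, $0<\alpha\le 1$, $a_i>0$, $u_i^*>0$, and $g_i:(0,\infty)\to(0,\infty)$ differentiable and strictly increasing for each $i$. Define $V(u)=\sum_{i=1}^n a_i\Psi_i(u_i)$ with $\Psi_i(u_i)=u_i-u_i^*-\int_{u_i^*}^{u_i}\frac{g_i(u_i^*)}{g_i(s)}ds$. Then for all $t\ge t_0$, $\,{}^{C}_{t_0}D^{\alpha}_t\,V(u(t))\le\sum_{i=1}^n a_i\left(1-\frac{g_i(u_i^*)}{g_i(u_i(t))}\right)\,{}^{C}_{t_0}D^{\alpha}_t\,u_i(t)$. -/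
open MeasureTheory Filter Set Topology

private lemma cont_rpow_alpha (t α : ℝ) (hα0 : 0 ≤ α) :
    Continuous fun y : ℝ => (t - y) ^ α := by
  rw [continuous_iff_continuousAt]
  intro y
  exact (Real.continuousAt_rpow_const _ _ (Or.inr hα0)).comp
    ((continuous_const.sub continuous_id).continuousAt)

private lemma integrable_div_rpow {t0 t α : ℝ} (ht : t0 ≤ t) (hα0 : 0 < α) (hα1 : α < 1)
    {ψ : ℝ → ℝ} (hψ : ContinuousOn ψ (Icc t0 t)) :
    IntervalIntegrable (fun y => ψ y / (t - y) ^ α) volume t0 t := by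
  obtain ⟨M, hM⟩ := isCompact_Icc.exists_bound_of_continuousOn hψ
  have hM0 : 0 ≤ M := le_trans (norm_nonneg _) (hM t0 ⟨le_rfl, ht⟩)
  have hbase : IntervalIntegrable (fun x : ℝ => x ^ (-α)) volume (t - t0) (t - t) :=
    intervalIntegral.intervalIntegrable_rpow' (by linarith)
  have hg0 : IntervalIntegrable (fun y => M * (t - y) ^ (-α)) volume t0 t := by
    have h1 := hbase.comp_sub_left t
    simp only [sub_sub_cancel] at h1
    exact h1.const_mul M
  refine hg0.mono_fun ?_ ?_
  · have h1 : AEStronglyMeasurable ψ (volume.restrict (Set.uIoc t0 t)) := by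
      rw [uIoc_of_le ht]
      exact (hψ.mono Ioc_subset_Icc_self).aestronglyMeasurable measurableSet_Ioc
    have h2 : Measurable fun y : ℝ => ((t - y) ^ α)⁻¹ :=
      ((cont_rpow_alpha t α hα0.le).measurable).inv
    exact (h1.mul h2.aestronglyMeasurable).congr (ae_of_all _ fun y => by simp [div_eq_mul_inv])
  · rw [uIoc_of_le ht]
    refine (ae_restrict_mem measurableSet_Ioc).mono fun y hy => ?_
    have h1 : (0:ℝ) ≤ t - y := by linarith [hy.2]
    have h3 : (0:ℝ) ≤ (t - y) ^ α := Real.rpow_nonneg h1 α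
    have h4 : ‖M * (t - y) ^ (-α)‖ = M / (t - y) ^ α := by
      rw [Real.rpow_neg h1, Real.norm_eq_abs,
        abs_of_nonneg (mul_nonneg hM0 (inv_nonneg.2 h3)), mul_comm, inv_mul_eq_div]
    show ‖ψ y / (t - y) ^ α‖ ≤ ‖M * (t - y) ^ (-α)‖
    rw [h4, Real.norm_eq_abs, abs_div, abs_of_nonneg h3]
    exact div_le_div_of_nonneg_right (hM y ⟨hy.1.le, hy.2⟩) h3

private lemma core_ineq (t0 t α : ℝ) (htt : t0 < t) (hα0 : 0 < α) (hα1 : α < 1)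
    (F h : ℝ → ℝ)
    (hFd : ∀ y ∈ Icc t0 t, HasDerivAt F (h y) y)
    (hh : ContinuousOn h (Icc t0 t))
    (hF0 : ∀ y ∈ Icc t0 t, 0 ≤ F y)
    (hFt : F t = 0) (hht : h t = 0) :
    ∫ y in t0..t, h y / (t - y) ^ α ≤ 0 := by
  have hint : IntervalIntegrable (fun y => h y / (t - y) ^ α) volume t0 t :=
    integrable_div_rpow htt.le hα0 hα1 hh
  have hFc : ContinuousOn F (Icc t0 t) := fun y hy =>
    ((hFd y hy).continuousAt).continuousWithinAt
  set l : Filter ℝ := 𝓝[Ioo t0 t] t with hl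
  haveI hlne : l.NeBot := by
    rw [hl, ← mem_closure_iff_nhdsWithin_neBot, closure_Ioo htt.ne]
    exact ⟨htt.le, le_rfl⟩
  -- the key eventual inequality
  have key : ∀ s ∈ Ioo t0 t, (∫ y in t0..s, h y / (t - y) ^ α) ≤ F s * (t - s) ^ (-α) := by
    intro s hs
    have hsub : Icc t0 s ⊆ Icc t0 t := Icc_subset_Icc le_rfl hs.2.le
    have hne : ∀ y ∈ Icc t0 s, t - y ≠ 0 := by
      intro y hy
      have : y < t := lt_of_le_of_lt hy.2 hs.2
      intro hc; linarith [sub_eq_zero.mp hc]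
    have hW : ∀ y ∈ Icc t0 s, HasDerivAt (fun z => F z * (t - z) ^ (-α))
        (h y * (t - y) ^ (-α) + F y * (α * (t - y) ^ (-α - 1))) y := by
      intro y hy
      have hyt : y < t := lt_of_le_of_lt hy.2 hs.2
      have hpos : (0:ℝ) < t - y := by linarith
      have h2 : HasDerivAt (fun x : ℝ => x ^ (-α)) (-α * (t - y) ^ (-α - 1)) (t - y) :=
        Real.hasDerivAt_rpow_const (Or.inl hpos.ne')
      have h3 : HasDerivAt (fun z : ℝ => t - z) (-1) y := (hasDerivAt_id y).const_sub t
      have h4 : HasDerivAt (fun z : ℝ => (t - z) ^ (-α)) (α * (t - y) ^ (-α - 1)) y := by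
        have := h2.comp y h3
        exact this.congr_deriv (by ring)
      exact (hFd y (hsub hy)).mul h4
    have hrp : ContinuousOn (fun y : ℝ => (t - y) ^ (-α)) (Icc t0 s) :=
      (continuousOn_const.sub continuousOn_id).rpow_const fun y hy => Or.inl (hne y hy)
    have hrp2 : ContinuousOn (fun y : ℝ => (t - y) ^ (-α - 1)) (Icc t0 s) :=
      (continuousOn_const.sub continuousOn_id).rpow_const fun y hy => Or.inl (hne y hy)
    have hW'c : ContinuousOn
        (fun y => h y * (t - y) ^ (-α) + F y * (α * (t - y) ^ (-α - 1))) (Icc t0 s) :=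
      ((hh.mono hsub).mul hrp).add ((hFc.mono hsub).mul (continuousOn_const.mul hrp2))
    have hW'int : IntervalIntegrable
        (fun y => h y * (t - y) ^ (-α) + F y * (α * (t - y) ^ (-α - 1))) volume t0 s := by
      apply ContinuousOn.intervalIntegrable
      rwa [uIcc_of_le hs.1.le]
    have heq := intervalIntegral.integral_eq_sub_of_hasDerivAt
      (f := fun z => F z * (t - z) ^ (-α)) (by rwa [uIcc_of_le hs.1.le]) hW'int
    have hmono : (∫ y in t0..s, h y / (t - y) ^ α)
        ≤ ∫ y in t0..s, (h y * (t - y) ^ (-α) + F y * (α * (t - y) ^ (-α - 1))) := by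
      apply intervalIntegral.integral_mono_on hs.1.le
        (hint.mono_set (by rw [uIcc_of_le hs.1.le, uIcc_of_le htt.le]; exact hsub)) hW'int
      intro y hy
      have hyt : y < t := lt_of_le_of_lt hy.2 hs.2
      have hpos : (0:ℝ) < t - y := by linarith
      have e1 : h y / (t - y) ^ α = h y * (t - y) ^ (-α) := by
        rw [Real.rpow_neg hpos.le, div_eq_mul_inv]
      rw [e1]
      have : 0 ≤ F y * (α * (t - y) ^ (-α - 1)) :=
        mul_nonneg (hF0 y (hsub hy)) (mul_nonneg hα0.le (Real.rpow_nonneg hpos.le _))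
      linarith
    have hWt0 : 0 ≤ F t0 * (t - t0) ^ (-α) :=
      mul_nonneg (hF0 t0 ⟨le_rfl, htt.le⟩) (Real.rpow_nonneg (by linarith) _)
    calc (∫ y in t0..s, h y / (t - y) ^ α)
        ≤ F s * (t - s) ^ (-α) - F t0 * (t - t0) ^ (-α) := by rw [← heq]; exact hmono
      _ ≤ F s * (t - s) ^ (-α) := by linarith
  -- limits
  have hP : Tendsto (fun s => ∫ y in t0..s, h y / (t - y) ^ α) l
      (𝓝 (∫ y in t0..t, h y / (t - y) ^ α)) := by
    have h1 := intervalIntegral.continuousOn_primitive_interval' hint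
      (a := t0) (by rw [uIcc_of_le htt.le]; exact ⟨le_rfl, htt.le⟩)
    have h2 := h1 t (by rw [uIcc_of_le htt.le]; exact ⟨htt.le, le_rfl⟩)
    exact h2.tendsto.mono_left
      (nhdsWithin_mono t (by rw [uIcc_of_le htt.le]; exact Ioo_subset_Icc_self))
  have hQ : Tendsto (fun s => F s * (t - s) ^ (-α)) l (𝓝 0) := by
    have hA : Tendsto (fun s => F s / (s - t)) l (𝓝 0) := by
      have h1 := hFd t ⟨htt.le, le_rfl⟩
      rw [hasDerivAt_iff_tendsto_slope, hht] at h1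
      have h2 := h1.mono_left (nhdsWithin_mono t fun x (hx : x ∈ Ioo t0 t) => ne_of_lt hx.2)
      refine h2.congr fun s => ?_
      rw [slope_def_field, hFt, sub_zero]
    have hB : Tendsto (fun s => (t - s) ^ ((1:ℝ) - α)) l (𝓝 0) := by
      have hc : ContinuousAt (fun x : ℝ => x ^ ((1:ℝ) - α)) 0 :=
        Real.continuousAt_rpow_const 0 _ (Or.inr (by linarith))
      have h0 : Tendsto (fun s : ℝ => t - s) l (𝓝 0) := by
        have h1 : Tendsto (fun s : ℝ => t - s) (𝓝 t) (𝓝 (t - t)) :=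
          (continuous_const.sub continuous_id).tendsto t
        simpa using h1.mono_left nhdsWithin_le_nhds
      have h2 := (hc.tendsto).comp h0
      simpa [Function.comp_def, Real.zero_rpow (by linarith : (1:ℝ) - α ≠ 0)] using h2
    have h3 := (hA.mul hB).neg
    rw [zero_mul, neg_zero] at h3
    refine h3.congr' ?_
    filter_upwards [self_mem_nhdsWithin] with s hs
    have hst : (0:ℝ) < t - s := by linarith [hs.2]
    have huv : (t - s) ^ ((1:ℝ) - α) = (t - s) * (t - s) ^ (-α) := by
      rw [show (1:ℝ) - α = 1 + (-α) by ring, Real.rpow_add hst, Real.rpow_one]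
    rw [huv]
    have hne : s - t ≠ 0 := by intro hc; linarith [sub_eq_zero.mp hc]
    field_simp
    ring
  have hev : (fun s => ∫ y in t0..s, h y / (t - y) ^ α) ≤ᶠ[l]
      fun s => F s * (t - s) ^ (-α) := by
    filter_upwards [self_mem_nhdsWithin] with s hs using key s hs
  exact le_of_tendsto_of_tendsto hP hQ hev

private lemma hasDerivAt_primitive_pos {φ : ℝ → ℝ} (hφ : ContinuousOn φ (Ioi 0))
    {p x : ℝ} (hp : 0 < p) (hx : 0 < x) :
    HasDerivAt (fun z => ∫ s in p..z, φ s) (φ x) x := by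
  have hsub : uIcc p x ⊆ Ioi 0 := fun s hs => lt_of_lt_of_le (lt_min hp hx) hs.1
  exact intervalIntegral.integral_hasDerivAt_right
    ((hφ.mono hsub).intervalIntegrable)
    (hφ.stronglyMeasurableAtFilter isOpen_Ioi x hx)
    (hφ.continuousAt (Ioi_mem_nhds hx))

theorem caputo_sum_volterra_estimate
    (n : ℕ) (t0 α : ℝ)
    (u : Fin n → ℝ → ℝ) (a ustar : Fin n → ℝ) (g : Fin n → ℝ → ℝ)
    (hu : ∀ i, ContDiff ℝ 1 (u i))
    (hupos : ∀ i, ∀ t, t0 ≤ t → 0 < u i t)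
    (ha : ∀ i, 0 < a i) (hustar : ∀ i, 0 < ustar i)
    (hgdiff : ∀ i, DifferentiableOn ℝ (g i) (Set.Ioi (0:ℝ)))
    (hgpos : ∀ i, ∀ s, 0 < s → 0 < g i s)
    (hgmono : ∀ i, StrictMonoOn (g i) (Set.Ioi (0:ℝ)))
    (hα0 : 0 < α) (hα1 : α ≤ 1)
    (t : ℝ) (ht : t0 ≤ t) :
    caputo t0 α
      (fun τ => ∑ i, a i *
        (u i τ - ustar i - ∫ s in (ustar i)..(u i τ), g i (ustar i) / g i s)) t
      ≤ ∑ i, a i * (1 - g i (ustar i) / g i (u i t)) * caputo t0 α (u i) t := by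
  have hGc : ∀ i, ContinuousOn (g i) (Ioi 0) := fun i => (hgdiff i).continuousOn
  have hgne : ∀ i, ∀ s ∈ Ioi (0:ℝ), g i s ≠ 0 := fun i s hs => (hgpos i s hs).ne'
  set φ : Fin n → ℝ → ℝ := fun i s => 1 - g i (ustar i) / g i s with hφdef
  have hφc : ∀ i, ContinuousOn (φ i) (Ioi 0) := fun i =>
    continuousOn_const.sub (continuousOn_const.div (hGc i) (hgne i))
  have hφmono : ∀ i, MonotoneOn (φ i) (Ioi 0) := by
    intro i x hx y hy hxy
    have h1 : g i (ustar i) / g i y ≤ g i (ustar i) / g i x :=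
      div_le_div_of_nonneg_left (le_of_lt (hgpos i _ (hustar i))) (hgpos i x hx)
        (((hgmono i).monotoneOn) hx hy hxy)
    simpa only [hφdef] using sub_le_sub_left h1 1
  have hUd : ∀ i, ∀ y : ℝ, HasDerivAt (u i) (deriv (u i) y) y := fun i y =>
    ((hu i).differentiable one_ne_zero y).hasDerivAt
  have hUc : ∀ i, Continuous (u i) := fun i => (hu i).continuous
  have hU'c : ∀ i, Continuous (deriv (u i)) := fun i => (hu i).continuous_deriv le_rfl
  have hVd : ∀ y, t0 ≤ y → HasDerivAt (fun τ => ∑ i, a i *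
        (u i τ - ustar i - ∫ s in (ustar i)..(u i τ), g i (ustar i) / g i s))
      (∑ i, a i * (φ i (u i y) * deriv (u i) y)) y := by
    intro y hy
    apply HasDerivAt.fun_sum
    intro i _
    have hx : 0 < u i y := hupos i y hy
    have hχ : ContinuousOn (fun s => g i (ustar i) / g i s) (Ioi 0) :=
      continuousOn_const.div (hGc i) (hgne i)
    have h1 := (hasDerivAt_primitive_pos hχ (hustar i) hx).comp y (hUd i y)
    have h2 := (((hUd i y).sub_const (ustar i)).sub h1).const_mul (a i)
    refine h2.congr_deriv ?_
    simp only [hφdef]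
    ring
  by_cases hα : α = 1
  · simp only [caputo, if_pos hα]
    rw [(hVd t ht).deriv]
    apply le_of_eq
    apply Finset.sum_congr rfl
    intro i _
    simp only [hφdef]
    ring
  · simp only [caputo, if_neg hα]
    have hα1' : α < 1 := lt_of_le_of_ne hα1 hα
    rcases eq_or_lt_of_le ht with rfl | htt
    · simp [intervalIntegral.integral_same]
    -- main case
    have hsubI : ∀ (x y : ℝ), 0 < x → 0 < y → uIcc x y ⊆ Ioi (0:ℝ) :=
      fun x y hx hy s hs => lt_of_lt_of_le (lt_min hx hy) hs.1
    have hφUc : ∀ i, ContinuousOn (fun y => φ i (u i y)) (Icc t0 t) := fun i =>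
      (hφc i).comp (hUc i).continuousOn fun y hy => hupos i y hy.1
    have hhc : ContinuousOn
        (fun y => ∑ i, a i * ((φ i (u i y) - φ i (u i t)) * deriv (u i) y)) (Icc t0 t) := by
      apply continuousOn_finset_sum
      intro i _
      exact continuousOn_const.mul
        (((hφUc i).sub continuousOn_const).mul (hU'c i).continuousOn)
    set Ψ : Fin n → ℝ → ℝ := fun i x => ∫ s in (ustar i)..x, φ i s with hΨdef
    have hcore : ∫ y in t0..t,
        (∑ i, a i * ((φ i (u i y) - φ i (u i t)) * deriv (u i) y)) / (t - y) ^ α ≤ 0 := by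
      apply core_ineq t0 t α htt hα0 hα1'
        (fun y => ∑ i, a i *
          ((Ψ i (u i y) - Ψ i (u i t)) - φ i (u i t) * (u i y - u i t)))
      · -- derivative
        intro y hy
        apply HasDerivAt.fun_sum
        intro i _
        have h1 := (hasDerivAt_primitive_pos (hφc i) (hustar i)
          (hupos i y hy.1)).comp y (hUd i y)
        have h2 := ((h1.sub_const (Ψ i (u i t))).sub
          (((hUd i y).sub_const (u i t)).const_mul (φ i (u i t)))).const_mul (a i)
        refine h2.congr_deriv ?_
        ring
      · exact hhc
      · -- nonnegativity
        intro y hy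
        apply Finset.sum_nonneg
        intro i _
        apply mul_nonneg (ha i).le
        have hut : 0 < u i t := hupos i t ht
        have huy : 0 < u i y := hupos i y hy.1
        have hint1 : IntervalIntegrable (φ i) volume (ustar i) (u i t) :=
          ((hφc i).mono (hsubI _ _ (hustar i) hut)).intervalIntegrable
        have hint2 : IntervalIntegrable (φ i) volume (u i t) (u i y) :=
          ((hφc i).mono (hsubI _ _ hut huy)).intervalIntegrable
        have hadj := intervalIntegral.integral_add_adjacent_intervals hint1 hint2
        have e2 : ∫ s in (u i t)..(u i y), φ i s = Ψ i (u i y) - Ψ i (u i t) := by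
          simp only [hΨdef]; linarith [hadj]
        have e3 : ∫ s in (u i t)..(u i y), (φ i s - φ i (u i t))
            = (Ψ i (u i y) - Ψ i (u i t)) - (u i y - u i t) * φ i (u i t) := by
          rw [intervalIntegral.integral_sub hint2 intervalIntegrable_const, e2,
            intervalIntegral.integral_const, smul_eq_mul]
        have e4 : 0 ≤ ∫ s in (u i t)..(u i y), (φ i s - φ i (u i t)) := by
          rcases le_total (u i t) (u i y) with hle | hle
          · apply intervalIntegral.integral_nonneg hle
            intro s hs
            have hs0 : s ∈ Ioi (0:ℝ) := lt_of_lt_of_le hut hs.1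
            exact sub_nonneg.2 (hφmono i (mem_Ioi.2 hut) hs0 hs.1)
          · rw [intervalIntegral.integral_symm, ← intervalIntegral.integral_neg]
            apply intervalIntegral.integral_nonneg hle
            intro s hs
            have hs0 : s ∈ Ioi (0:ℝ) := lt_of_lt_of_le huy hs.1
            exact neg_nonneg.2 (sub_nonpos.2 (hφmono i hs0 (mem_Ioi.2 hut) hs.2))
        linarith [e3, e4]
      · -- F t = 0
        simp
      · -- h t = 0
        simp
    have hqint : ∀ i,
        IntervalIntegrable (fun y => deriv (u i) y / (t - y) ^ α) volume t0 t :=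
      fun i => integrable_div_rpow ht hα0 hα1' (hU'c i).continuousOn
    have hhint : IntervalIntegrable (fun y =>
        (∑ i, a i * ((φ i (u i y) - φ i (u i t)) * deriv (u i) y)) / (t - y) ^ α)
        volume t0 t := integrable_div_rpow ht hα0 hα1' hhc
    have hsumint : IntervalIntegrable (fun y =>
        ∑ i, a i * φ i (u i t) * (deriv (u i) y / (t - y) ^ α)) volume t0 t := by
      have hs := IntervalIntegrable.sum (μ := volume) (a := t0) (b := t) Finset.univ
        (f := fun i => fun y => a i * φ i (u i t) * (deriv (u i) y / (t - y) ^ α))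
        (fun i _ => (hqint i).const_mul (a i * φ i (u i t)))
      have he : (∑ i : Fin n, fun y => a i * φ i (u i t) * (deriv (u i) y / (t - y) ^ α))
          = fun y => ∑ i, a i * φ i (u i t) * (deriv (u i) y / (t - y) ^ α) := by
        funext y
        simp [Finset.sum_apply]
      rwa [he] at hs
    have hcongr : EqOn
        (fun y => deriv (fun τ => ∑ i, a i *
          (u i τ - ustar i - ∫ s in (ustar i)..(u i τ), g i (ustar i) / g i s)) y
            / (t - y) ^ α)
        (fun y => (∑ i, a i * (φ i (u i y) * deriv (u i) y)) / (t - y) ^ α)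
        (uIcc t0 t) := by
      intro y hy
      rw [uIcc_of_le ht] at hy
      simp only
      rw [(hVd y hy.1).deriv]
    rw [intervalIntegral.integral_congr hcongr]
    have hpt : ∀ y : ℝ, (∑ i, a i * (φ i (u i y) * deriv (u i) y)) / (t - y) ^ α
        = (∑ i, a i * ((φ i (u i y) - φ i (u i t)) * deriv (u i) y)) / (t - y) ^ α
          + ∑ i, a i * φ i (u i t) * (deriv (u i) y / (t - y) ^ α) := by
      intro y
      have e1 : (∑ i, a i * (φ i (u i y) * deriv (u i) y))
          = (∑ i, a i * ((φ i (u i y) - φ i (u i t)) * deriv (u i) y))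
            + ∑ i, a i * φ i (u i t) * deriv (u i) y := by
        rw [← Finset.sum_add_distrib]
        exact Finset.sum_congr rfl fun i _ => by ring
      rw [e1, add_div]
      simp only [Finset.sum_div, mul_div_assoc]
    have hsplit : (∫ y in t0..t, (∑ i, a i * (φ i (u i y) * deriv (u i) y)) / (t - y) ^ α)
        = (∫ y in t0..t,
            (∑ i, a i * ((φ i (u i y) - φ i (u i t)) * deriv (u i) y)) / (t - y) ^ α)
          + ∑ i, a i * φ i (u i t) * ∫ y in t0..t, deriv (u i) y / (t - y) ^ α := by
      simp only [hpt]
      rw [intervalIntegral.integral_add hhint hsumint]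
      congr 1
      rw [intervalIntegral.integral_finset_sum
        (fun i _ => (hqint i).const_mul (a i * φ i (u i t)))]
      exact Finset.sum_congr rfl fun i _ => intervalIntegral.integral_const_mul _ _
    rw [hsplit, mul_add]
    have hΓ : (0:ℝ) ≤ 1 / Real.Gamma (1 - α) :=
      le_of_lt (one_div_pos.2 (Real.Gamma_pos_of_pos (by linarith)))
    have h1 : 1 / Real.Gamma (1 - α) * (∫ y in t0..t,
        (∑ i, a i * ((φ i (u i y) - φ i (u i t)) * deriv (u i) y)) / (t - y) ^ α) ≤ 0 :=
      mul_nonpos_of_nonneg_of_nonpos hΓ hcore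
    have h2 : 1 / Real.Gamma (1 - α) *
        (∑ i, a i * φ i (u i t) * ∫ y in t0..t, deriv (u i) y / (t - y) ^ α)
        = ∑ i, a i * (1 - g i (ustar i) / g i (u i t)) *
          (1 / Real.Gamma (1 - α) * ∫ y in t0..t, deriv (u i) y / (t - y) ^ α) := by
      rw [Finset.mul_sum]
      apply Finset.sum_congr rfl
      intro i _
      simp only [hφdef]
      ring
    linarith [h1, h2.le, h2.ge]
end

section
/- Consider the SICA system with positive parameters and $R_0=\frac{\beta\xi_1\xi_2}{\mathcal{N}}\cdot\frac{\Lambda}{\mu}$ where $\xi_1=\alpha+\mu+d$, $\xi_2=\omega+\mu$, $\mathcal{N}=\mu[\xi_2(\rho+\xi_1)+\xi_1\phi+\rho d]+\rho\omega d$. If $R_0>1$, then the system $\Lambda-\mu S-\beta SI=0$, $\beta SI-(\rho+\phi+\mu)I+\alpha A+\omega C=0$, $\phi I-\xi_2 C=0$, $\rho I-\xi_1 A=0$ has a solution $(S^*,I^*,C^*,A^*)$ with all coordinates strictly positive. -/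
theorem sica_endemic_equilibrium_exists
    (Λ μ β ρ φ α ω d : ℝ)
    (hΛ : 0 < Λ) (hμ : 0 < μ) (hβ : 0 < β) (hρ : 0 < ρ)
    (hφ : 0 < φ) (hα : 0 < α) (hω : 0 < ω) (hd : 0 < d)
    (ξ1 ξ2 N R0 : ℝ)
    (hξ1 : ξ1 = α + μ + d) (hξ2 : ξ2 = ω + μ)
    (hN : N = μ * (ξ2 * (ρ + ξ1) + ξ1 * φ + ρ * d) + ρ * ω * d)
    (hR0 : R0 = β * ξ1 * ξ2 / N * (Λ / μ))
    (hR0gt : 1 < R0) :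
    ∃ Sstar Istar Cstar Astar : ℝ,
      0 < Sstar ∧ 0 < Istar ∧ 0 < Cstar ∧ 0 < Astar ∧
      Λ - μ * Sstar - β * Sstar * Istar = 0 ∧
      β * Sstar * Istar - (ρ + φ + μ) * Istar + α * Astar + ω * Cstar = 0 ∧
      φ * Istar - ξ2 * Cstar = 0 ∧
      ρ * Istar - ξ1 * Astar = 0 := by
  have hξ1p : 0 < ξ1 := by rw [hξ1]; linarith
  have hξ2p : 0 < ξ2 := by rw [hξ2]; linarith
  have hNp : 0 < N := by
    rw [hN]; positivity
  have hR0p : 0 < R0 := lt_trans one_pos hR0gt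
  set Ist : ℝ := μ * (R0 - 1) / β with hIst
  have hIp : 0 < Ist := by
    apply div_pos _ hβ
    have : 0 < R0 - 1 := by linarith
    positivity
  refine ⟨Λ / (μ * R0), Ist, φ * Ist / ξ2, ρ * Ist / ξ1, ?_, hIp, ?_, ?_, ?_, ?_, ?_, ?_⟩
  · positivity
  · positivity
  · positivity
  · -- first equation
    have : μ + β * Ist = μ * R0 := by
      rw [hIst]; field_simp; ring
    field_simp
    nlinarith [this]
  · -- second equation
    have hβS : β * (Λ / (μ * R0)) = N / (ξ1 * ξ2) := by
      rw [hR0]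
      field_simp
    have key : N = (ρ + φ + μ) * ξ1 * ξ2 - α * ρ * ξ2 - ω * φ * ξ1 := by
      rw [hN, hξ1, hξ2]; ring
    rw [mul_comm (β * (Λ / (μ * R0))) Ist] at *
    rw [hβS]
    field_simp
    linear_combination Ist * key
  · field_simp; ring
  · field_simp; ring
end

section
/- Let $\alpha\in(0,1)$, $t>t_0$, and let $w:[t_0,t]\to[0,\infty)$ be continuously differentiable with $w(t)=0$ and $\lim_{y\to t^-}(t-y)^{-\alpha}w(y)=0$. Then $\frac{1}{\Gamma(1-\alpha)}\int_{t_0}^{t}\frac{w'(y)}{(t-y)^{\alpha}}\,dy = -\frac{(t-t_0)^{-\alpha}}{\Gamma(1-\alpha)}w(t_0)-\int_{t_0}^{t}\frac{\alpha(t-y)^{-(\alpha+1)}}{\Gamma(1-\alpha)}w(y)\,dy \le 0$. -/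
open MeasureTheory Filter Set

theorem caputo_integration_by_parts
    (α t0 t : ℝ) (hα0 : 0 < α) (hα1 : α < 1) (ht : t0 < t)
    (w : ℝ → ℝ)
    (hw : ContDiffOn ℝ 1 w (Set.Icc t0 t))
    (hwnonneg : ∀ y ∈ Set.Icc t0 t, 0 ≤ w y)
    (hwt : w t = 0)
    (hlim : Tendsto (fun y => (t - y) ^ (-α) * w y)
      (nhdsWithin t (Set.Iio t)) (nhds 0)) :
    (1 / Real.Gamma (1 - α)) * (∫ y in t0..t, deriv w y / (t - y) ^ α)
      = -((t - t0) ^ (-α) / Real.Gamma (1 - α)) * w t0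
        - ∫ y in t0..t, α * (t - y) ^ (-(α + 1)) / Real.Gamma (1 - α) * w y ∧
    (1 / Real.Gamma (1 - α)) * (∫ y in t0..t, deriv w y / (t - y) ^ α) ≤ 0 := by
  have hG : 0 < Real.Gamma (1 - α) := Real.Gamma_pos_of_pos (by linarith)
  set G := Real.Gamma (1 - α) with hGdef
  have hudiff : UniqueDiffOn ℝ (Icc t0 t) := uniqueDiffOn_Icc ht
  set g : ℝ → ℝ := derivWithin w (Icc t0 t) with hgdef
  have hgcont : ContinuousOn g (Icc t0 t) := hw.continuousOn_derivWithin hudiff le_rfl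
  have hwdiff : DifferentiableOn ℝ w (Icc t0 t) := hw.differentiableOn one_ne_zero
  have hwcont : ContinuousOn w (Icc t0 t) := hw.continuousOn
  obtain ⟨M, hM⟩ : ∃ M, ∀ y ∈ Icc t0 t, ‖g y‖ ≤ M :=
    isCompact_Icc.exists_bound_of_continuousOn hgcont
  have hM0 : 0 ≤ M := le_trans (norm_nonneg _) (hM t ⟨ht.le, le_rfl⟩)
  -- w y ≤ M * (t - y)
  have hwlin : ∀ y ∈ Icc t0 t, w y ≤ M * (t - y) := by
    intro y hy
    have h := Convex.norm_image_sub_le_of_norm_derivWithin_le hwdiff hM (convex_Icc t0 t)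
      (Set.right_mem_Icc.2 ht.le) hy
    rw [hwt, sub_zero] at h
    have : |w y| ≤ M * |y - t| := h
    rw [abs_sub_comm, abs_of_nonneg (sub_nonneg.2 hy.2)] at this
    exact le_trans (le_abs_self _) this
  -- deriv w = g on interior, with HasDerivAt
  have hderiv_eq : ∀ y ∈ Ioo t0 t, deriv w y = g y := fun y hy =>
    (derivWithin_of_mem_nhds (Icc_mem_nhds hy.1 hy.2)).symm
  have hder : ∀ y ∈ Ioo t0 t, HasDerivAt w (g y) y := by
    intro y hy
    have hn : Icc t0 t ∈ nhds y := Icc_mem_nhds hy.1 hy.2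
    have h2 : DifferentiableAt ℝ w y := (hwdiff y (Ioo_subset_Icc_self hy)).differentiableAt hn
    have h3 := h2.hasDerivAt
    rw [← hderiv_eq y hy]
    exact h3
  -- integrability of (t - y)^(-α)
  have hφ : IntervalIntegrable (fun y => (t - y) ^ (-α)) volume t0 t := by
    have h := (intervalIntegral.intervalIntegrable_rpow' (a := t - t0) (b := t - t) (r := -α)
      (by linarith)).comp_sub_left t
    simpa using h
  have hφIoc : IntegrableOn (fun y => (t - y) ^ (-α)) (Ioc t0 t) volume := by
    rwa [intervalIntegrable_iff_integrableOn_Ioc_of_le ht.le] at hφ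
  have hφIoo : IntegrableOn (fun y => (t - y) ^ (-α)) (Ioo t0 t) volume :=
    hφIoc.mono_set Ioo_subset_Ioc_self
  have hrpowcont : ∀ r : ℝ, ContinuousOn (fun y => (t - y) ^ r) (Ioo t0 t) := by
    intro r
    exact (continuousOn_const.sub continuousOn_id).rpow_const
      (fun y hy => Or.inl (ne_of_gt (sub_pos.2 hy.2)))
  -- integrability of the two integrands
  have I_B : IntervalIntegrable (fun y => (t - y) ^ (-α) * deriv w y) volume t0 t := by
    rw [intervalIntegrable_iff_integrableOn_Ioc_of_le ht.le,
      integrableOn_Ioc_iff_integrableOn_Ioo]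
    apply Integrable.mono' (g := fun y => M * (t - y) ^ (-α)) (hφIoo.const_mul M)
    · exact (((hrpowcont (-α)).aestronglyMeasurable measurableSet_Ioo).mul
        ((measurable_deriv w).aestronglyMeasurable.restrict))
    · refine (ae_restrict_iff' measurableSet_Ioo).2 (ae_of_all _ fun y hy => ?_)
      have h1 : 0 ≤ (t - y) ^ (-α) := Real.rpow_nonneg (by linarith [hy.2]) _
      rw [norm_mul, Real.norm_eq_abs, abs_of_nonneg h1, hderiv_eq y hy]
      calc (t - y) ^ (-α) * ‖g y‖ ≤ (t - y) ^ (-α) * M :=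
            mul_le_mul_of_nonneg_left (hM y (Ioo_subset_Icc_self hy)) h1
        _ = M * (t - y) ^ (-α) := mul_comm _ _
  have I_C : IntervalIntegrable (fun y => α * (t - y) ^ (-(α + 1)) * w y) volume t0 t := by
    rw [intervalIntegrable_iff_integrableOn_Ioc_of_le ht.le,
      integrableOn_Ioc_iff_integrableOn_Ioo]
    apply Integrable.mono' (g := fun y => α * (M * (t - y) ^ (-α)))
      ((hφIoo.const_mul M).const_mul α)
    · exact ((continuousOn_const.mul (hrpowcont (-(α + 1)))).mul
        (hwcont.mono Ioo_subset_Icc_self)).aestronglyMeasurable measurableSet_Ioo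
    · refine (ae_restrict_iff' measurableSet_Ioo).2 (ae_of_all _ fun y hy => ?_)
      have hty : 0 < t - y := sub_pos.2 hy.2
      have h1 : 0 ≤ (t - y) ^ (-(α + 1)) := Real.rpow_nonneg hty.le _
      have hw0 : 0 ≤ w y := hwnonneg y (Ioo_subset_Icc_self hy)
      have hkey : (t - y) ^ (-(α + 1)) * (t - y) = (t - y) ^ (-α) := by
        rw [← Real.rpow_add_one (ne_of_gt hty)]
        congr 1
        ring
      rw [norm_mul, norm_mul, Real.norm_eq_abs, Real.norm_eq_abs, Real.norm_eq_abs,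
        abs_of_nonneg hα0.le, abs_of_nonneg h1, abs_of_nonneg hw0]
      calc α * (t - y) ^ (-(α + 1)) * w y
          ≤ α * (t - y) ^ (-(α + 1)) * (M * (t - y)) := by
            apply mul_le_mul_of_nonneg_left (hwlin y (Ioo_subset_Icc_self hy))
              (mul_nonneg hα0.le h1)
        _ = α * (M * ((t - y) ^ (-(α + 1)) * (t - y))) := by ring
        _ = α * (M * (t - y) ^ (-α)) := by rw [hkey]
  -- FTC on [t0, s] for s < t
  have eq1 : ∀ s ∈ Ioo t0 t,
      (∫ y in t0..s, α * (t - y) ^ (-(α + 1)) * w y)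
        + (∫ y in t0..s, (t - y) ^ (-α) * deriv w y)
      = (t - s) ^ (-α) * w s - (t - t0) ^ (-α) * w t0 := by
    intro s hs
    have hsub : Set.uIcc t0 s ⊆ Set.uIcc t0 t := by
      rw [uIcc_of_le hs.1.le, uIcc_of_le ht.le]
      exact Icc_subset_Icc le_rfl hs.2.le
    have hIC := I_C.mono_set hsub
    have hIB := I_B.mono_set hsub
    rw [← intervalIntegral.integral_add hIC hIB]
    apply intervalIntegral.integral_eq_sub_of_hasDeriv_right_of_le hs.1.le
    · -- continuity of F on Icc t0 s
      apply ContinuousOn.mul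
      · apply ContinuousOn.rpow_const (continuousOn_const.sub continuousOn_id)
        intro y hy
        exact Or.inl (ne_of_gt (by linarith [hy.2, hs.2] : (0:ℝ) < t - y))
      · exact hwcont.mono (Icc_subset_Icc le_rfl hs.2.le)
    · intro y hy
      have hy' : y ∈ Ioo t0 t := ⟨hy.1, lt_trans hy.2 hs.2⟩
      have hty : 0 < t - y := sub_pos.2 hy'.2
      have h1 : HasDerivAt (fun y : ℝ => t - y) (-1) y := (hasDerivAt_id y).const_sub t
      have h2 := (Real.hasDerivAt_rpow_const (p := -α) (Or.inl (ne_of_gt hty))).comp y h1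
      have h2' : HasDerivAt (fun y : ℝ => (t - y) ^ (-α)) (α * (t - y) ^ (-(α + 1))) y := by
        have hexp : -α - 1 = -(α + 1) := by ring
        refine h2.congr_deriv ?_
        rw [← hexp]; ring
      have h3 := h2'.mul (hder y hy')
      rw [hderiv_eq y hy']
      exact h3.hasDerivWithinAt
    · exact hIC.add hIB
  -- limits
  set A := ∫ y in t0..t, α * (t - y) ^ (-(α + 1)) * w y with hA
  set B := ∫ y in t0..t, (t - y) ^ (-α) * deriv w y with hB
  have hmemt : t ∈ Set.uIcc t0 t := Set.right_mem_uIcc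
  have hIoosub : Ioo t0 t ⊆ Set.uIcc t0 t := by
    rw [uIcc_of_le ht.le]; exact Ioo_subset_Icc_self
  have hΨ : Tendsto (fun s => ∫ y in t0..s, α * (t - y) ^ (-(α + 1)) * w y)
      (nhdsWithin t (Ioo t0 t)) (nhds A) := by
    have := (intervalIntegral.continuousOn_primitive_interval' I_C Set.left_mem_uIcc) t hmemt
    exact this.mono_left (nhdsWithin_mono t hIoosub)
  have hΦ : Tendsto (fun s => ∫ y in t0..s, (t - y) ^ (-α) * deriv w y)
      (nhdsWithin t (Ioo t0 t)) (nhds B) := by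
    have := (intervalIntegral.continuousOn_primitive_interval' I_B Set.left_mem_uIcc) t hmemt
    exact this.mono_left (nhdsWithin_mono t hIoosub)
  have hF : Tendsto (fun s => (t - s) ^ (-α) * w s) (nhdsWithin t (Ioo t0 t)) (nhds 0) :=
    hlim.mono_left (nhdsWithin_mono t Ioo_subset_Iio_self)
  have hne : (nhdsWithin t (Ioo t0 t)).NeBot := right_nhdsWithin_Ioo_neBot ht
  have key : A + B = 0 - (t - t0) ^ (-α) * w t0 := by
    refine tendsto_nhds_unique (hΨ.add hΦ) ?_
    refine ((hF.sub tendsto_const_nhds).congr' ?_)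
    filter_upwards [self_mem_nhdsWithin] with s hs
    exact (eq1 s hs).symm
  have hB_eq : B = -((t - t0) ^ (-α)) * w t0 - A := by linarith [key]
  -- relate the target integrals to A and B
  have hJ1 : (∫ y in t0..t, deriv w y / (t - y) ^ α) = B := by
    apply intervalIntegral.integral_congr
    intro y hy
    rw [uIcc_of_le ht.le] at hy
    show deriv w y / (t - y) ^ α = (t - y) ^ (-α) * deriv w y
    rw [Real.rpow_neg (sub_nonneg.2 hy.2), div_eq_mul_inv, mul_comm]
  have hJ2 : (∫ y in t0..t, α * (t - y) ^ (-(α + 1)) / G * w y) = (1 / G) * A := by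
    rw [hA, ← intervalIntegral.integral_const_mul]
    apply intervalIntegral.integral_congr
    intro y _
    ring
  have hA_nonneg : 0 ≤ A := by
    apply intervalIntegral.integral_nonneg ht.le
    intro y hy
    exact mul_nonneg (mul_nonneg hα0.le (Real.rpow_nonneg (sub_nonneg.2 hy.2) _))
      (hwnonneg y hy)
  have hmain : (1 / G) * (∫ y in t0..t, deriv w y / (t - y) ^ α)
      = -((t - t0) ^ (-α) / G) * w t0
        - ∫ y in t0..t, α * (t - y) ^ (-(α + 1)) / G * w y := by
    rw [hJ1, hJ2, hB_eq]
    field_simp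
  refine ⟨hmain, ?_⟩
  rw [hmain, hJ2]
  have h1 : 0 ≤ (t - t0) ^ (-α) / G * w t0 :=
    mul_nonneg (div_nonneg (Real.rpow_nonneg (sub_nonneg.2 ht.le) _) hG.le)
      (hwnonneg t0 ⟨le_rfl, ht.le⟩)
  have h2 : 0 ≤ (1 / G) * A := mul_nonneg (by positivity) hA_nonneg
  linarith
end
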